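/- Let B and C be pretriangulated categories and let F ⊣ G be an adjunction with F : B ⥤ C an exact (triangulated) functor and unit η. Then F is faithful if and only if for every object H of B the unit morphism η_H : H ⟶ G(F(H)) is a split monomorphism (admits a retraction). (This is the abstract form of the paper's Lemma: a flat morphism p is SCDT iff p^* : D(S) → D(X) is faithful.) -/

import Mathlib

open CategoryTheory CategoryTheory.Limits CategoryTheory.Pretriangulated

universe v₁ v₂ u₁ u₂

/-- For an adjunction `F ⊣ G` between pretriangulated categories with `F` exact
(triangulated), `F` is faithful iff every unit morphism `η_H : H ⟶ G(F(H))` is a split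
monomorphism. -/
theorem faithful_iff_unit_isSplitMono
    {B : Type u₁} [Category.{v₁} B] [HasZeroObject B] [HasShift B ℤ] [Preadditive B]
    [∀ n : ℤ, (shiftFunctor B n).Additive] [Pretriangulated B]
    {C : Type u₂} [Category.{v₂} C] [HasZeroObject C] [HasShift C ℤ] [Preadditive C]
    [∀ n : ℤ, (shiftFunctor C n).Additive] [Pretriangulated C]
    (F : B ⥤ C) [F.CommShift ℤ] [F.IsTriangulated] (G : C ⥤ B) (adj : F ⊣ G) :
    F.Faithful ↔ ∀ H : B, IsSplitMono (adj.unit.app H) := by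
  constructor
  · intro hF H
    obtain ⟨Z, g, δ, hT⟩ := distinguished_cocone_triangle (adj.unit.app H)
    -- `F.map (adj.unit.app H)` is a split mono (retraction given by the counit)
    have hsplit : IsSplitMono (F.map (adj.unit.app H)) :=
      ⟨⟨⟨adj.counit.app (F.obj H), adj.left_triangle_components H⟩⟩⟩
    -- hence `δ = 0`, since `F.map δ` composed with a mono is zero
    have hδ : δ = 0 := by
      apply hF.map_injective
      have hT' := F.map_distinguished _ hT
      have h := comp_distTriang_mor_zero₃₁ _ hT'
      dsimp [Functor.mapTriangle] at h
      have : Mono ((shiftFunctor C (1 : ℤ)).map (F.map (adj.unit.app H))) := by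
        have : Mono (F.map (adj.unit.app H)) := IsSplitMono.mono _
        infer_instance
      rw [Functor.map_zero, ← cancel_mono ((F.commShiftIso (1 : ℤ)).hom.app H),
        ← cancel_mono ((shiftFunctor C (1 : ℤ)).map (F.map (adj.unit.app H)))]
      simp only [zero_comp]
      exact h
    -- now obtain a retraction from the (inverse-rotated) triangle
    obtain ⟨r, hr⟩ := Pretriangulated.Triangle.yoneda_exact₂ _
      (inv_rot_of_distTriang _ hT) (𝟙 H) (by
        dsimp [Triangle.invRotate]
        rw [hδ]
        simp
        erw [Functor.map_zero]
        simp only [neg_zero, zero_comp]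
        exact Category.comp_id _)
    exact ⟨⟨⟨r, hr.symm⟩⟩⟩
  · intro h
    refine ⟨fun {X Y} f g hfg => ?_⟩
    have h1 := adj.unit.naturality f
    have h2 := adj.unit.naturality g
    dsimp at h1 h2
    have : Mono (adj.unit.app Y) := IsSplitMono.mono _
    rw [← cancel_mono (adj.unit.app Y), h1, h2, hfg]
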